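/- For purely improper c ∈ ℝ^m_{pi}⟨⟨X⟩⟩, the group inverse in the multiplicative dynamic feedback group satisfies the identities c^{∘−1} = c^{⧢−1} ∘̄ δ_{c^{∘−1}} and (c^{∘−1})^{⧢−1} = c ∘̄ δ_{c^{∘−1}}. -/

import Mathlib

open scoped BigOperators

namespace FPS

/-- A (noncommutative) formal power series over alphabet `X` is a map from words to `ℝ`. -/
abbrev Series (X : Type*) := List X → ℝ

noncomputable section

variable {X : Type*} [DecidableEq X]

/-- The series `1·∅`. -/
def one : Series X := fun η => if η = [] then 1 else 0

/-- Cauchy (concatenation) product. -/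
def cauchy (c d : Series X) : Series X := fun η =>
  ∑ i ∈ Finset.range (η.length + 1), c (η.take i) * d (η.drop i)

/-- Shuffle product. -/
def sh (c d : Series X) : List X → ℝ
  | [] => c [] * d []
  | x :: t => sh (fun w => c (x :: w)) d t + sh c (fun w => d (x :: w)) t

/-- Cauchy powers. -/
def cpow (c : Series X) : ℕ → Series X
  | 0 => one
  | k + 1 => cauchy c (cpow c k)

/-- Shuffle powers. -/
def shpow (c : Series X) : ℕ → Series X
  | 0 => one
  | k + 1 => sh c (shpow c k)

/-- The proper series `1 - s/(s,∅)` entering the inverse formulas (negated proper part of `s/(s,∅)`). -/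
def sprime (s : Series X) : Series X := fun w => if w = [] then 0 else - (s w / s [])

/-- Cauchy inverse `(s,∅)⁻¹ Σ_k (s')^k` of a purely improper series. -/
def cInv (s : Series X) : Series X := fun η =>
  (s [])⁻¹ * ∑ k ∈ Finset.range (η.length + 1), cpow (sprime s) k η

/-- Shuffle inverse `(s,∅)⁻¹ Σ_k (s')^{⧢k}` of a purely improper series. -/
def shInv (s : Series X) : Series X := fun η =>
  (s [])⁻¹ * ∑ k ∈ Finset.range (η.length + 1), shpow (sprime s) k η

/-- The order: minimal length of a word in the support (`⊤` for the zero series). -/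
def ord (c : Series X) : ℕ∞ := sInf ((fun η : List X => (η.length : ℕ∞)) '' {η | c η ≠ 0})

/-- `σ^n` with `σ^⊤ = 0`. -/
def powE (σ : ℝ) : ℕ∞ → ℝ := fun n => if n = ⊤ then 0 else σ ^ n.toNat

/-- The ultrametric `κ(c,d) = σ^{ord(c-d)}`. -/
def kappa (σ : ℝ) (c d : Series X) : ℝ := powE σ (ord (c - d))

/-- Order of a vector of series (minimum over components). -/
def ordV {n : ℕ} (c : Fin n → Series X) : ℕ∞ := ⨅ i, ord (c i)

/-- Ultrametric on vectors of series. -/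
def kappaV (σ : ℝ) {n : ℕ} (c d : Fin n → Series X) : ℝ := powE σ (ordV (c - d))

/-- Proper part `c - (c,∅)∅`. -/
def properPart (c : Series X) : Series X := fun w => if w = [] then 0 else c w

/-- Left concatenation by a letter: `x·s`. -/
def leftc (x : X) (s : Series X) : Series X := fun η =>
  match η with
  | [] => 0
  | y :: t => if y = x then s t else 0

end

noncomputable section

/-- `φ̄_d(η)` : the algebra homomorphism defining the multiplicative mixed composition
product, with `φ̄_d(x_0)(w) = x_0 w` and `φ̄_d(x_i)(w) = x_i (d_i ⧢ w)`. -/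
def phiWord {m : ℕ} (d : Fin m → Series (Fin (m + 1))) :
    List (Fin (m + 1)) → Series (Fin (m + 1)) → Series (Fin (m + 1))
  | [], w => w
  | i :: t, w =>
      Fin.cases (leftc 0 (phiWord d t w)) (fun j => leftc j.succ (sh (d j) (phiWord d t w))) i

/-- Multiplicative mixed composition product `c ∘̄ δ_d = Σ_η (c,η) φ̄_d(η)(1)`. -/
def mix {m : ℕ} (c : Series (Fin (m + 1))) (d : Fin m → Series (Fin (m + 1))) :
    Series (Fin (m + 1)) := fun η =>
  ∑ k ∈ Finset.range (η.length + 1),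
    ∑ v : List.Vector (Fin (m + 1)) k, c v.toList * phiWord d v.toList one η

/-- `ψ_e(η)` : the algebra homomorphism defining the composition product, with
`ψ_e(x'_i)(w) = x_0 (e_i ⧢ w)`, `e_0 = 1∅`. -/
def psiWord {ℓ m : ℕ} (e : Fin ℓ → Series (Fin (m + 1))) :
    List (Fin (ℓ + 1)) → Series (Fin (m + 1)) → Series (Fin (m + 1))
  | [], w => w
  | i :: t, w => leftc 0 (sh (Fin.cases one e i) (psiWord e t w))

/-- Composition product `c ∘ e = Σ_η (c,η) ψ_e(η)(1)`. -/
def comp {ℓ m : ℕ} (c : Series (Fin (ℓ + 1))) (e : Fin ℓ → Series (Fin (m + 1))) :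
    Series (Fin (m + 1)) := fun η =>
  ∑ k ∈ Finset.range (η.length + 1),
    ∑ v : List.Vector (Fin (ℓ + 1)) k, c v.toList * psiWord e v.toList one η

/-- The multiplicative composition product on `δ`-series:
`δ_c ∘ δ_d = δ_{d ⧢ (c ∘̄ δ_d)}`, expressed on the underlying series. -/
def star {m : ℕ} (c d : Fin m → Series (Fin (m + 1))) : Fin m → Series (Fin (m + 1)) :=
  fun i => sh (d i) (mix (c i) d)

/-- The all-ones series vector (generating series of the identity `δ_1`). -/
def oneV {X : Type*} [DecidableEq X] (m : ℕ) : Fin m → Series X := fun _ => one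

open Classical in
/-- The inverse `d^{∘-1}` in the multiplicative dynamic output feedback group: the unique
solution of `e = d^{⧢-1} ∘̄ δ_e`. -/
def dynInv {m : ℕ} (d : Fin m → Series (Fin (m + 1))) : Fin m → Series (Fin (m + 1)) :=
  if h : ∃ e : Fin m → Series (Fin (m + 1)), e = fun i => mix (shInv (d i)) e then h.choose
  else oneV m

/-- Shuffle power of a family: `c^{⧢n} = c_1^{⧢n_1} ⧢ ⋯ ⧢ c_ℓ^{⧢n_ℓ}`. -/
def shFam {X : Type*} [DecidableEq X] {ℓ : ℕ} (c : Fin ℓ → Series X) (n : Fin ℓ →₀ ℕ) :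
    Series X :=
  (List.finRange ℓ).foldr (fun i acc => sh (shpow (c i) (n i)) acc) one

/-- Wiener-Fliess composition product `d ∘̂ c = Σ_{η∈X̃*} (d,η) c^{⧢η}` of a commutative
series `d` with a (proper) noncommutative series vector `c`. -/
def wf {X : Type*} [DecidableEq X] {ℓ : ℕ} (d : MvPowerSeries (Fin ℓ) ℝ)
    (c : Fin ℓ → Series X) : Series X := fun η =>
  ∑ n ∈ Finset.Iic (Finsupp.equivFunOnFinite.symm fun _ : Fin ℓ => η.length),
    MvPowerSeries.coeff n d * shFam c n η

end


section ShLemmas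
set_option linter.unusedSectionVars false
variable {X : Type*} [DecidableEq X]


lemma sh_nil (a b : Series X) : sh a b [] = a [] * b [] := rfl
lemma sh_cons (a b : Series X) (x : X) (t : List X) :
    sh a b (x :: t) = sh (fun w => a (x :: w)) b t + sh a (fun w => b (x :: w)) t := rfl

lemma sh_congr : ∀ (η : List X) (a a' b b' : Series X),
    (∀ u : List X, u.length ≤ η.length → a u = a' u) →
    (∀ u : List X, u.length ≤ η.length → b u = b' u) →
    sh a b η = sh a' b' η
  | [], a, a', b, b', ha, hb => by
      rw [sh_nil, sh_nil, ha [] (by simp), hb [] (by simp)]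
  | x :: t, a, a', b, b', ha, hb => by
      rw [sh_cons, sh_cons,
        sh_congr t _ _ _ _ (fun u hu => ha (x :: u) (by simpa using hu))
          (fun u hu => hb u (by simpa using Nat.le_succ_of_le hu)),
        sh_congr t _ _ _ _ (fun u hu => ha u (by simpa using Nat.le_succ_of_le hu))
          (fun u hu => hb (x :: u) (by simpa using hu))]

lemma sh_zero_right : ∀ (η : List X) (a : Series X), sh a (fun _ => 0) η = 0
  | [], a => by rw [sh_nil]; ring
  | x :: t, a => by rw [sh_cons, sh_zero_right t, sh_zero_right t]; ring

lemma sh_zero_left : ∀ (η : List X) (b : Series X), sh (fun _ => 0) b η = 0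
  | [], b => by rw [sh_nil]; ring
  | x :: t, b => by rw [sh_cons, sh_zero_left t, sh_zero_left t]; ring

lemma sh_add_right : ∀ (η : List X) (a b b' : Series X),
    sh a (fun w => b w + b' w) η = sh a b η + sh a b' η
  | [], a, b, b' => by rw [sh_nil, sh_nil, sh_nil]; ring
  | x :: t, a, b, b' => by
      rw [sh_cons, sh_add_right t, sh_add_right t, sh_cons, sh_cons]; ring

lemma sh_add_left : ∀ (η : List X) (a a' b : Series X),
    sh (fun w => a w + a' w) b η = sh a b η + sh a' b η
  | [], a, a', b => by rw [sh_nil, sh_nil, sh_nil]; ring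
  | x :: t, a, a', b => by
      rw [sh_cons, sh_add_left t, sh_add_left t, sh_cons, sh_cons]; ring

lemma sh_mul_right : ∀ (η : List X) (a : Series X) (r : ℝ) (b : Series X),
    sh a (fun w => r * b w) η = r * sh a b η
  | [], a, r, b => by rw [sh_nil, sh_nil]; ring
  | x :: t, a, r, b => by
      rw [sh_cons, sh_mul_right t, sh_mul_right t, sh_cons]; ring

lemma sh_mul_left : ∀ (η : List X) (r : ℝ) (a b : Series X),
    sh (fun w => r * a w) b η = r * sh a b η
  | [], r, a, b => by rw [sh_nil, sh_nil]; ring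
  | x :: t, r, a, b => by
      rw [sh_cons, sh_mul_left t, sh_mul_left t, sh_cons]; ring

lemma sh_sum_right {ι : Type*} (s : Finset ι) (f : ι → Series X) (a : Series X) (η : List X) :
    sh a (fun w => ∑ x ∈ s, f x w) η = ∑ x ∈ s, sh a (f x) η := by
  classical
  induction s using Finset.induction with
  | empty => simpa using sh_zero_right η a
  | insert i s' hx ih =>
      simp only [Finset.sum_insert hx]
      rw [sh_add_right η a (f i) (fun w => ∑ x ∈ s', f x w), ih]

lemma sh_comm : ∀ (η : List X) (a b : Series X), sh a b η = sh b a η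
  | [], a, b => by rw [sh_nil, sh_nil]; ring
  | x :: t, a, b => by rw [sh_cons, sh_cons, sh_comm t, sh_comm t (fun w => b (x :: w))]; ring

lemma sh_comm' (a b : Series X) : sh a b = sh b a := funext fun η => sh_comm η a b

lemma sh_assoc : ∀ (η : List X) (a b c : Series X), sh (sh a b) c η = sh a (sh b c) η
  | [], a, b, c => by rw [sh_nil, sh_nil, sh_nil, sh_nil]; ring
  | x :: t, a, b, c => by
      rw [sh_cons, sh_cons]
      have e1 : (fun w => sh a b (x :: w)) =
          fun w => sh (fun u => a (x :: u)) b w + sh a (fun u => b (x :: u)) w :=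
        funext fun w => sh_cons a b x w
      have e2 : (fun w => sh b c (x :: w)) =
          fun w => sh (fun u => b (x :: u)) c w + sh b (fun u => c (x :: u)) w :=
        funext fun w => sh_cons b c x w
      rw [e1, e2, sh_add_left t, sh_add_right t, sh_assoc t, sh_assoc t, sh_assoc t]
      ring

lemma sh_left_comm (η : List X) (a b c : Series X) : sh a (sh b c) η = sh b (sh a c) η := by
  rw [← sh_assoc, sh_comm' a b, sh_assoc]

lemma sh_one_left : ∀ (η : List X) (b : Series X), sh one b η = b η
  | [], b => by rw [sh_nil]; simp [one]
  | x :: t, b => by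
      rw [sh_cons]
      have e1 : (fun w => one (x :: w)) = (fun _ : List X => (0:ℝ)) := by
        funext w; simp [one]
      rw [e1, sh_zero_left t, sh_one_left t]; ring

lemma sh_vanish_right (η : List X) (a b : Series X)
    (hb : ∀ u : List X, u.length ≤ η.length → b u = 0) : sh a b η = 0 := by
  rw [sh_congr η a a b (fun _ => 0) (fun _ _ => rfl) hb, sh_zero_right]

lemma sh_proper_congr : ∀ (η : List X) (a b b' : Series X), a [] = 0 →
    (∀ u : List X, u.length < η.length → b u = b' u) → sh a b η = sh a b' η
  | [], a, b, b', ha, hb => by rw [sh_nil, sh_nil, ha]; ring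
  | x :: t, a, b, b', ha, hb => by
      rw [sh_cons, sh_cons,
        sh_congr t _ _ b b' (fun u _ => rfl) (fun u hu => hb u (by simpa using Nat.lt_succ_of_le hu)),
        sh_proper_congr t a _ _ ha (fun u hu => hb (x :: u) (by simpa using hu))]

lemma sh_proper_vanish : ∀ (η : List X) (k : ℕ) (a b : Series X), a [] = 0 →
    (∀ u : List X, u.length < k → b u = 0) → η.length ≤ k → sh a b η = 0
  | [], k, a, b, ha, hb, _ => by rw [sh_nil, ha]; ring
  | x :: t, k, a, b, ha, hb, hl => by
      rw [sh_cons]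
      have h1 : sh (fun w => a (x :: w)) b t = 0 :=
        sh_vanish_right t _ b (fun u hu => hb u (by simp at hl ⊢; omega))
      have h2 : sh a (fun w => b (x :: w)) t = 0 :=
        sh_proper_vanish t (k - 1) a _ ha
          (fun u hu => hb (x :: u) (by simp at hl ⊢; omega)) (by simp at hl ⊢; omega)
      rw [h1, h2]; ring

lemma sprime_nil (s : Series X) : sprime s [] = 0 := by simp [sprime]

lemma shpow_vanish : ∀ (k : ℕ) (a : Series X), a [] = 0 →
    ∀ η : List X, η.length < k → shpow a k η = 0
  | 0, a, ha, η, h => absurd h (Nat.not_lt_zero _)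
  | k + 1, a, ha, η, h => by
      show sh a (shpow a k) η = 0
      exact sh_proper_vanish η k a _ ha (fun u hu => shpow_vanish k a ha u hu) (by omega)

lemma shInv_nil (s : Series X) : shInv s [] = (s [])⁻¹ := by
  simp [shInv, shpow, one]

lemma shInv_ext (s : Series X) (u : List X) (N : ℕ) (h : u.length ≤ N) :
    shInv s u = (s [])⁻¹ * ∑ k ∈ Finset.range (N + 1), shpow (sprime s) k u := by
  unfold shInv
  congr 1
  exact Finset.sum_subset (Finset.range_subset_range.mpr (by omega))
    (fun k _ hk' => shpow_vanish k (sprime s) (sprime_nil s) u (by simp at hk'; omega))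

lemma s_decomp (s : Series X) (hs : s [] ≠ 0) (u : List X) :
    s u = s [] * one u + (- s []) * sprime s u := by
  rcases u with _ | ⟨x, t⟩
  · simp [one, sprime]
  · simp [one, sprime]
    field_simp

lemma sh_shInv (s : Series X) (hs : s [] ≠ 0) (η : List X) : sh s (shInv s) η = one η := by
  have h1 : sh s (shInv s) η =
      sh s (fun u => (s [])⁻¹ * ∑ k ∈ Finset.range (η.length + 1), shpow (sprime s) k u) η :=
    sh_congr η _ _ _ _ (fun _ _ => rfl) (fun u hu => shInv_ext s u η.length hu)
  rw [h1, sh_mul_right, sh_sum_right]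
  have h2 : ∀ k : ℕ, sh s (shpow (sprime s) k) η =
      s [] * shpow (sprime s) k η - s [] * shpow (sprime s) (k + 1) η := by
    intro k
    have h3 : sh s (shpow (sprime s) k) η =
        sh (fun u => s [] * one u + (- s []) * sprime s u) (shpow (sprime s) k) η :=
      sh_congr η _ _ _ _ (fun u _ => s_decomp s hs u) (fun _ _ => rfl)
    rw [h3, sh_add_left, sh_mul_left, sh_mul_left, sh_one_left]
    show _ = _ - s [] * sh (sprime s) (shpow (sprime s) k) η
    ring
  simp only [h2]
  rw [Finset.sum_range_sub' (fun k => s [] * shpow (sprime s) k η)]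
  rw [shpow_vanish (η.length + 1) (sprime s) (sprime_nil s) η (by omega)]
  show (s [])⁻¹ * (s [] * shpow (sprime s) 0 η - s [] * 0) = one η
  show (s [])⁻¹ * (s [] * one η - s [] * 0) = one η
  field_simp
  simp

lemma sh_split (s b : Series X) (η : List X) :
    sh s b η = s [] * b η + sh (properPart s) b η := by
  have h1 : sh s b η = sh (fun u => s [] * one u + properPart s u) b η := by
    refine sh_congr η _ _ _ _ (fun u _ => ?_) (fun _ _ => rfl)
    rcases u with _ | ⟨x, t⟩ <;> simp [one, properPart]
  rw [h1, sh_add_left, sh_mul_left, sh_one_left]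

lemma sh_cancel (s b b' : Series X) (hs : s [] ≠ 0)
    (h : ∀ η : List X, sh s b η = sh s b' η) : ∀ η : List X, b η = b' η := by
  have key : ∀ (n : ℕ) (η : List X), η.length ≤ n → b η = b' η := by
    intro n
    induction n with
    | zero =>
        intro η hη
        have := h η
        rw [sh_split s b η, sh_split s b' η] at this
        have hp : sh (properPart s) b η = sh (properPart s) b' η :=
          sh_proper_congr η _ _ _ (by simp [properPart]) (fun u hu => absurd hu (by omega))
        rw [hp] at this
        exact mul_left_cancel₀ hs (by linarith)
    | succ n ih =>
        intro η hη
        have := h η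
        rw [sh_split s b η, sh_split s b' η] at this
        have hp : sh (properPart s) b η = sh (properPart s) b' η :=
          sh_proper_congr η _ _ _ (by simp [properPart]) (fun u hu => ih u (by omega))
        rw [hp] at this
        exact mul_left_cancel₀ hs (by linarith)
  exact fun η => key η.length η le_rfl

end ShLemmas
section MixLemmas
set_option linter.unusedSectionVars false
variable {m : ℕ}

lemma leftc_nil (x : Fin (m+1)) (s : Series (Fin (m+1))) : leftc x s [] = 0 := rfl
lemma leftc_cons (x : Fin (m+1)) (s : Series (Fin (m+1))) (y : Fin (m+1)) (t : List (Fin (m+1))) :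
    leftc x s (y :: t) = if y = x then s t else 0 := rfl

lemma phi_nil (d : Fin m → Series (Fin (m+1))) (w : Series (Fin (m+1))) :
    phiWord d [] w = w := rfl

lemma phi_zero_cons (d : Fin m → Series (Fin (m+1))) (t : List (Fin (m+1)))
    (w : Series (Fin (m+1))) :
    phiWord d ((0 : Fin (m+1)) :: t) w = leftc 0 (phiWord d t w) := by
  simp [phiWord]

lemma phi_succ_cons (d : Fin m → Series (Fin (m+1))) (j : Fin m) (t : List (Fin (m+1)))
    (w : Series (Fin (m+1))) :
    phiWord d ((Fin.succ j) :: t) w = leftc j.succ (sh (d j) (phiWord d t w)) := by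
  simp [phiWord]

lemma phi_vanish (d : Fin m → Series (Fin (m+1))) :
    ∀ (l : List (Fin (m+1))) (η : List (Fin (m+1))), η.length < l.length →
      phiWord d l one η = 0 := by
  intro l
  induction l with
  | nil => intro η h; simp at h
  | cons i l' ih =>
    intro η h
    induction i using Fin.cases with
    | zero =>
        rw [phi_zero_cons]
        rcases η with _ | ⟨y, t⟩
        · rw [leftc_nil]
        · rw [leftc_cons]
          split
          · exact ih t (by simp at h ⊢; omega)
          · rfl
    | succ j =>
        rw [phi_succ_cons]
        rcases η with _ | ⟨y, t⟩
        · rw [leftc_nil]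
        · rw [leftc_cons]
          split
          · exact sh_vanish_right t _ _ (fun u hu => ih u (by simp at h ⊢; omega))
          · rfl

lemma phi_congr (d d' : Fin m → Series (Fin (m+1))) :
    ∀ (l : List (Fin (m+1))) (w : Series (Fin (m+1))) (η : List (Fin (m+1))),
      (∀ (j : Fin m) (u : List (Fin (m+1))), u.length ≤ η.length → d j u = d' j u) →
      phiWord d l w η = phiWord d' l w η := by
  intro l
  induction l with
  | nil => intro w η _; rfl
  | cons i l' ih =>
    intro w η h
    induction i using Fin.cases with
    | zero =>
        rw [phi_zero_cons, phi_zero_cons]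
        rcases η with _ | ⟨y, t⟩
        · rfl
        · rw [leftc_cons, leftc_cons]
          split
          · exact ih w t (fun j u hu => h j u (by simp; omega))
          · rfl
    | succ j =>
        rw [phi_succ_cons, phi_succ_cons]
        rcases η with _ | ⟨y, t⟩
        · rfl
        · rw [leftc_cons, leftc_cons]
          split
          · exact sh_congr t _ _ _ _ (fun u hu => h j u (by simp; omega))
              (fun u hu => ih w u (fun j' u' hu' => h j' u' (by simp; omega)))
          · rfl

lemma phi_congr' (d d' : Fin m → Series (Fin (m+1))) (i : Fin (m+1)) (l : List (Fin (m+1)))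
    (w : Series (Fin (m+1))) (η : List (Fin (m+1)))
    (h : ∀ (j : Fin m) (u : List (Fin (m+1))), u.length < η.length → d j u = d' j u) :
    phiWord d (i :: l) w η = phiWord d' (i :: l) w η := by
  induction i using Fin.cases with
  | zero =>
      rw [phi_zero_cons, phi_zero_cons]
      rcases η with _ | ⟨y, t⟩
      · rfl
      · rw [leftc_cons, leftc_cons]
        split
        · exact phi_congr d d' l w t (fun j u hu => h j u (by simp; omega))
        · rfl
  | succ j =>
      rw [phi_succ_cons, phi_succ_cons]
      rcases η with _ | ⟨y, t⟩
      · rfl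
      · rw [leftc_cons, leftc_cons]
        split
        · exact sh_congr t _ _ _ _ (fun u hu => h j u (by simp; omega))
            (fun u hu => phi_congr d d' l w u (fun j' u' hu' => h j' u' (by simp; omega)))
        · rfl

def consEquiv (k : ℕ) : (Fin (m+1)) × List.Vector (Fin (m+1)) k ≃ List.Vector (Fin (m+1)) (k+1) where
  toFun := fun p => p.1 ::ᵥ p.2
  invFun := fun v => (v.head, v.tail)
  left_inv := by intro p; simp
  right_inv := by intro v; simp

lemma sum_vector_succ (k : ℕ) (f : List.Vector (Fin (m+1)) (k+1) → ℝ) :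
    ∑ v : List.Vector (Fin (m+1)) (k+1), f v =
      ∑ i : Fin (m+1), ∑ v : List.Vector (Fin (m+1)) k, f (i ::ᵥ v) := by
  rw [← Equiv.sum_comp (consEquiv k) f]
  exact Fintype.sum_prod_type _

lemma sum_vector_zero (f : List.Vector (Fin (m+1)) 0 → ℝ) :
    ∑ v : List.Vector (Fin (m+1)) 0, f v = f List.Vector.nil := by
  exact Finset.sum_eq_single_of_mem List.Vector.nil (Finset.mem_univ _)
    (fun v _ hv => (hv v.eq_nil).elim)

lemma mix_nil (c : Series (Fin (m+1))) (d : Fin m → Series (Fin (m+1))) :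
    mix c d [] = c [] := by
  show ∑ k ∈ Finset.range 1, _ = c []
  rw [Finset.sum_range_one, sum_vector_zero]
  simp [phi_nil, one]

lemma mix_ext (c : Series (Fin (m+1))) (d : Fin m → Series (Fin (m+1)))
    (η : List (Fin (m+1))) (N : ℕ) (h : η.length ≤ N) :
    mix c d η = ∑ k ∈ Finset.range (N + 1),
      ∑ v : List.Vector (Fin (m+1)) k, c v.toList * phiWord d v.toList one η := by
  unfold mix
  refine Finset.sum_subset (Finset.range_subset_range.mpr (by omega)) ?_
  intro k _ hk
  refine Finset.sum_eq_zero fun v _ => ?_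
  rw [phi_vanish d v.toList η (by rw [List.Vector.toList_length]; simp at hk; omega)]
  ring
end MixLemmas

section MixLemmas2
set_option linter.unusedSectionVars false
variable {m : ℕ}

lemma mix_cons_zero (c : Series (Fin (m+1))) (d : Fin m → Series (Fin (m+1)))
    (t : List (Fin (m+1))) :
    mix c d ((0 : Fin (m+1)) :: t) = mix (fun w => c (0 :: w)) d t := by
  unfold mix
  rw [List.length_cons, Finset.sum_range_succ']
  have h0 : (∑ v : List.Vector (Fin (m+1)) 0,
      c v.toList * phiWord d v.toList one ((0:Fin (m+1)) :: t)) = 0 := by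
    rw [sum_vector_zero]
    simp [phi_nil, one]
  rw [h0, add_zero]
  refine Finset.sum_congr rfl fun k _ => ?_
  rw [sum_vector_succ, Fin.sum_univ_succ]
  have hs : (∑ j : Fin m, ∑ v : List.Vector (Fin (m+1)) k,
      c ((Fin.succ j) ::ᵥ v).toList * phiWord d ((Fin.succ j) ::ᵥ v).toList one
        ((0:Fin (m+1)) :: t)) = 0 := by
    refine Finset.sum_eq_zero fun j _ => Finset.sum_eq_zero fun v _ => ?_
    rw [List.Vector.toList_cons, phi_succ_cons, leftc_cons,
      if_neg (fun h => (Fin.succ_ne_zero j) h.symm)]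
    ring
  rw [hs, add_zero]
  refine Finset.sum_congr rfl fun v _ => ?_
  rw [List.Vector.toList_cons, phi_zero_cons, leftc_cons, if_pos rfl]

lemma mix_cons_succ (c : Series (Fin (m+1))) (d : Fin m → Series (Fin (m+1)))
    (j : Fin m) (t : List (Fin (m+1))) :
    mix c d ((Fin.succ j) :: t) = sh (d j) (mix (fun w => c ((Fin.succ j) :: w)) d) t := by
  have hR : sh (d j) (mix (fun w => c ((Fin.succ j) :: w)) d) t =
      ∑ k ∈ Finset.range (t.length + 1), ∑ v : List.Vector (Fin (m+1)) k,
        c ((Fin.succ j) :: v.toList) * sh (d j) (phiWord d v.toList one) t := by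
    have h1 : sh (d j) (mix (fun w => c ((Fin.succ j) :: w)) d) t =
        sh (d j) (fun u => ∑ k ∈ Finset.range (t.length + 1),
          ∑ v : List.Vector (Fin (m+1)) k,
            c ((Fin.succ j) :: v.toList) * phiWord d v.toList one u) t := by
      refine sh_congr t _ _ _ _ (fun _ _ => rfl) (fun u hu => ?_)
      rw [mix_ext _ d u t.length hu]
    rw [h1, sh_sum_right]
    refine Finset.sum_congr rfl fun k _ => ?_
    rw [sh_sum_right]
    exact Finset.sum_congr rfl fun v _ => sh_mul_right t _ _ _
  rw [hR]
  unfold mix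
  rw [List.length_cons, Finset.sum_range_succ']
  have h0 : (∑ v : List.Vector (Fin (m+1)) 0,
      c v.toList * phiWord d v.toList one ((Fin.succ j) :: t)) = 0 := by
    rw [sum_vector_zero]; simp [phi_nil, one]
  rw [h0, add_zero]
  refine Finset.sum_congr rfl fun k _ => ?_
  rw [sum_vector_succ, Fin.sum_univ_succ]
  have h1 : (∑ v : List.Vector (Fin (m+1)) k,
      c ((0:Fin (m+1)) ::ᵥ v).toList * phiWord d ((0:Fin (m+1)) ::ᵥ v).toList one
        ((Fin.succ j) :: t)) = 0 := by
    refine Finset.sum_eq_zero fun v _ => ?_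
    rw [List.Vector.toList_cons, phi_zero_cons, leftc_cons, if_neg (Fin.succ_ne_zero j)]
    ring
  rw [h1, zero_add]
  have h2 : ∀ (j' : Fin m) (v : List.Vector (Fin (m+1)) k),
      c ((Fin.succ j') ::ᵥ v).toList * phiWord d ((Fin.succ j') ::ᵥ v).toList one
        ((Fin.succ j) :: t) =
      if j' = j then c ((Fin.succ j) :: v.toList) * sh (d j) (phiWord d v.toList one) t
      else 0 := by
    intro j' v
    rw [List.Vector.toList_cons, phi_succ_cons, leftc_cons]
    by_cases h : j' = j
    · subst h; rw [if_pos rfl, if_pos rfl]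
    · rw [if_neg (fun hh => h (Fin.succ_injective _ hh).symm), if_neg h]; ring
  simp only [h2]
  rw [Finset.sum_comm]
  refine Finset.sum_congr rfl fun v _ => ?_
  rw [Finset.sum_ite_eq' Finset.univ j
    (fun _ => c ((Fin.succ j) :: v.toList) * sh (d j) (phiWord d v.toList one) t),
    if_pos (Finset.mem_univ j)]

lemma mix_congr {c : Series (Fin (m+1))} {d d' : Fin m → Series (Fin (m+1))}
    (η : List (Fin (m+1)))
    (h : ∀ (j : Fin m) (u : List (Fin (m+1))), u.length < η.length → d j u = d' j u) :
    mix c d η = mix c d' η := by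
  unfold mix
  refine Finset.sum_congr rfl fun k _ => Finset.sum_congr rfl fun v _ => ?_
  rcases hl : v.toList with _ | ⟨i, l⟩
  · rfl
  · rw [phi_congr' d d' i l one η h]

lemma mix_add_left (f g : Series (Fin (m+1))) (d : Fin m → Series (Fin (m+1)))
    (η : List (Fin (m+1))) :
    mix (fun w => f w + g w) d η = mix f d η + mix g d η := by
  unfold mix
  rw [← Finset.sum_add_distrib]
  refine Finset.sum_congr rfl fun k _ => ?_
  rw [← Finset.sum_add_distrib]
  exact Finset.sum_congr rfl fun v _ => by ring

lemma mix_one (d : Fin m → Series (Fin (m+1))) (η : List (Fin (m+1))) :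
    mix one d η = one η := by
  unfold mix
  rw [Finset.sum_eq_single_of_mem 0 (Finset.mem_range.mpr (Nat.succ_pos _))]
  · rw [sum_vector_zero]; simp [phi_nil, one]
  · intro k _ hk
    refine Finset.sum_eq_zero fun v _ => ?_
    have hne : v.toList ≠ [] := fun hh => hk (by rw [← List.Vector.toList_length v, hh]; rfl)
    simp [one, hne]

lemma mix_sh (d : Fin m → Series (Fin (m+1))) :
    ∀ (n : ℕ) (η : List (Fin (m+1))) (a b : Series (Fin (m+1))), η.length ≤ n →
      mix (fun w => sh a b w) d η = sh (mix a d) (mix b d) η := by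
  intro n
  induction n with
  | zero =>
      intro η a b h
      rcases η with _ | ⟨y, t⟩
      · rw [mix_nil, sh_nil, sh_nil, mix_nil, mix_nil]
      · simp at h
  | succ n ih =>
      intro η a b h
      rcases η with _ | ⟨y, t⟩
      · rw [mix_nil, sh_nil, sh_nil, mix_nil, mix_nil]
      · induction y using Fin.cases with
        | zero =>
            rw [mix_cons_zero]
            have e1 : (fun w => sh a b ((0:Fin (m+1)) :: w)) =
                fun w => sh (fun u => a (0 :: u)) b w + sh a (fun u => b (0 :: u)) w :=
              funext fun w => sh_cons a b 0 w
            rw [e1, mix_add_left, ih t _ _ (by simp at h; omega), ih t _ _ (by simp at h; omega)]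
            rw [sh_cons]
            have e2 : (fun w => mix a d ((0:Fin (m+1)) :: w)) = mix (fun u => a (0 :: u)) d :=
              funext fun w => mix_cons_zero a d w
            have e3 : (fun w => mix b d ((0:Fin (m+1)) :: w)) = mix (fun u => b (0 :: u)) d :=
              funext fun w => mix_cons_zero b d w
            rw [e2, e3]
        | succ j =>
            rw [mix_cons_succ]
            have key : ∀ u : List (Fin (m+1)), u.length ≤ t.length →
                mix (fun w => sh a b ((Fin.succ j) :: w)) d u =
                sh (mix (fun w' => a ((Fin.succ j) :: w')) d) (mix b d) u +
                sh (mix a d) (mix (fun w' => b ((Fin.succ j) :: w')) d) u := by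
              intro u hu
              have e1 : (fun w => sh a b ((Fin.succ j) :: w)) =
                  fun w => sh (fun w' => a ((Fin.succ j) :: w')) b w +
                    sh a (fun w' => b ((Fin.succ j) :: w')) w :=
                funext fun w => sh_cons a b _ w
              rw [e1, mix_add_left, ih u _ _ (by simp at h; omega),
                ih u _ _ (by simp at h; omega)]
            have e4 : sh (d j) (mix (fun w => sh a b ((Fin.succ j) :: w)) d) t =
                sh (d j) (fun u =>
                  sh (mix (fun w' => a ((Fin.succ j) :: w')) d) (mix b d) u +
                  sh (mix a d) (mix (fun w' => b ((Fin.succ j) :: w')) d) u) t :=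
              sh_congr t _ _ _ _ (fun _ _ => rfl) key
            rw [e4, sh_add_right]
            rw [sh_cons]
            have e5 : (fun w => mix a d ((Fin.succ j) :: w)) =
                sh (d j) (mix (fun u => a ((Fin.succ j) :: u)) d) :=
              funext fun w => mix_cons_succ a d j w
            have e6 : (fun w => mix b d ((Fin.succ j) :: w)) =
                sh (d j) (mix (fun u => b ((Fin.succ j) :: u)) d) :=
              funext fun w => mix_cons_succ b d j w
            rw [e5, e6]
            rw [← sh_assoc t (d j) (mix (fun w' => a ((Fin.succ j) :: w')) d) (mix b d)]
            rw [sh_left_comm t (d j) (mix a d) (mix (fun w' => b ((Fin.succ j) :: w')) d)]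
end MixLemmas2

noncomputable section Final
variable {m : ℕ}

/-- The iteration map whose fixed point is the group inverse. -/
def FF (c : Fin m → Series (Fin (m+1))) :
    (Fin m → Series (Fin (m+1))) → (Fin m → Series (Fin (m+1))) :=
  fun e i => mix (shInv (c i)) e

lemma FF_agree (c : Fin m → Series (Fin (m+1))) :
    ∀ (n : ℕ) (i : Fin m) (η : List (Fin (m+1))), η.length < n →
      (FF c)^[n] (oneV m) i η = (FF c)^[n+1] (oneV m) i η := by
  intro n
  induction n with
  | zero => intro i η h; exact absurd h (Nat.not_lt_zero _)
  | succ n ih =>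
      intro i η h
      rw [Function.iterate_succ_apply' (FF c) n, Function.iterate_succ_apply' (FF c) (n+1)]
      show mix (shInv (c i)) ((FF c)^[n] (oneV m)) η = mix (shInv (c i)) ((FF c)^[n+1] (oneV m)) η
      exact mix_congr η (fun j u hu => ih j u (by omega))

lemma FF_chain (c : Fin m → Series (Fin (m+1))) (i : Fin m) (η : List (Fin (m+1)))
    (n n' : ℕ) (h : η.length < n) (hle : n ≤ n') :
    (FF c)^[n] (oneV m) i η = (FF c)^[n'] (oneV m) i η := by
  induction n', hle using Nat.le_induction with
  | base => rfl
  | succ n' hn ihh => rw [ihh, FF_agree c n' i η (by omega)]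

lemma FF_exists (c : Fin m → Series (Fin (m+1))) :
    ∃ e : Fin m → Series (Fin (m+1)), e = fun i => mix (shInv (c i)) e := by
  refine ⟨fun i η => (FF c)^[η.length + 1] (oneV m) i η, ?_⟩
  funext i η
  have h2 : mix (shInv (c i)) (fun j u => (FF c)^[u.length + 1] (oneV m) j u) η =
      mix (shInv (c i)) ((FF c)^[η.length] (oneV m)) η :=
    mix_congr η (fun j u hu => FF_chain c j u (u.length+1) η.length (by omega) (by omega))
  show (FF c)^[η.length + 1] (oneV m) i η = _
  rw [h2, Function.iterate_succ_apply' (FF c) η.length]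
  rfl

end Final

/-- For purely improper `c`, the group inverse `c^{∘-1}` satisfies
`c^{∘-1} = c^{⧢-1} ∘̄ δ_{c^{∘-1}}` and `(c^{∘-1})^{⧢-1} = c ∘̄ δ_{c^{∘-1}}`. -/
theorem dynInv_identities (m : ℕ) (c : Fin m → Series (Fin (m + 1)))
    (hc : ∀ i, c i [] ≠ 0) :
    dynInv c = (fun i => mix (shInv (c i)) (dynInv c)) ∧
    (fun i => shInv (dynInv c i)) = fun i => mix (c i) (dynInv c) := by
  classical
  have hex := FF_exists c
  have hd : dynInv c = hex.choose := by
    unfold dynInv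
    rw [dif_pos hex]
  have key1 : dynInv c = fun i => mix (shInv (c i)) (dynInv c) := by
    have hs := hex.choose_spec
    rw [← hd] at hs
    exact hs
  refine ⟨key1, ?_⟩
  funext i η
  have hnil : dynInv c i [] = (c i [])⁻¹ := by
    have h : dynInv c i = mix (shInv (c i)) (dynInv c) := congrFun key1 i
    rw [h, mix_nil, shInv_nil]
  have hone : ∀ w : List (Fin (m+1)), sh (c i) (shInv (c i)) w = one w :=
    sh_shInv (c i) (hc i)
  have hsh1 : (fun w => sh (c i) (shInv (c i)) w) = one := funext hone
  have hmain : ∀ w : List (Fin (m+1)), sh (mix (c i) (dynInv c)) (dynInv c i) w = one w := by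
    intro w
    have h3 := mix_sh (dynInv c) w.length w (c i) (shInv (c i)) le_rfl
    rw [hsh1, mix_one] at h3
    have h4 : mix (shInv (c i)) (dynInv c) = dynInv c i := (congrFun key1 i).symm
    rw [h4] at h3
    exact h3.symm
  have hinz : dynInv c i [] ≠ 0 := by rw [hnil]; exact inv_ne_zero (hc i)
  have hone2 : ∀ w : List (Fin (m+1)), sh (dynInv c i) (shInv (dynInv c i)) w = one w :=
    sh_shInv (dynInv c i) hinz
  have hcanc := sh_cancel (dynInv c i) (shInv (dynInv c i)) (mix (c i) (dynInv c)) hinz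
    (fun w => by rw [hone2 w, ← hmain w]; exact sh_comm w _ _)
  exact hcanc η

end FPS
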